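/- arXiv:2301.09803 — 2 statements merged into one kernel-verified Lean document; each statement's English description precedes it below -/
import Mathlib

section
/- Under the standing assumptions on φ and φ_λ, assume h is sequentially weakly continuous on H. Fix p ∈ [0,1], let ψ : H → ℝ ∪ {+∞} be a proper, convex, coercive, lower semicontinuous function with M(p) ∩ dom ψ ≠ ∅, where M(p) := {x : φ(x) ≥ p} and M_λ(p) := {x : φ_λ(x) ≥ p}. Let λ_k → 0⁺ and for each k let x_{λ_k} be a minimizer of the Moreau envelope M_{λ_k}ψ over M_{λ_k}(p). If x_{λ_k} converges weakly to x₀, then x₀ is a minimizer of ψ over M(p), and moreover M_{λ_k}ψ(x_{λ_k}) → ψ(x₀). (Theorem 5.1(b), weak convergence of minimizers.) -/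
open Filter Topology MeasureTheory

/-- The Moreau envelope of a function `S : H × E → ℝ` (in two arguments) with parameter
`lam`, for the Hilbert norm of the product. -/
noncomputable def moreauEnv2 {H E : Type*} [NormedAddCommGroup H] [InnerProductSpace ℝ H]
    [NormedAddCommGroup E] [InnerProductSpace ℝ E]
    (S : H → E → ℝ) (lam : ℝ) (x : H) (z : E) : ℝ :=
  ⨅ u : H × E, (S u.1 u.2 + (‖x - u.1‖ ^ 2 + ‖z - u.2‖ ^ 2) / (2 * lam))

/-- Weak (sequential) convergence in a Hilbert space: `⟪x_k, y⟫ → ⟪x₀, y⟫` for every `y`. -/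
def WeakSeqTendsto {H : Type*} [NormedAddCommGroup H] [InnerProductSpace ℝ H]
    (x : ℕ → H) (x₀ : H) : Prop :=
  ∀ y : H, Tendsto (fun k => (inner ℝ (x k) y : ℝ)) atTop (𝓝 (inner ℝ x₀ y))

/-- Moreau envelope of an extended-real-valued function `ψ : H → ℝ ∪ {±∞}`. -/
noncomputable def eMoreauEnv {H : Type*} [NormedAddCommGroup H] [InnerProductSpace ℝ H]
    (ψ : H → EReal) (lam : ℝ) (x : H) : EReal :=
  ⨅ z : H, (ψ z + ((‖x - z‖ ^ 2 / (2 * lam) : ℝ) : EReal))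

section Aux

variable {G : Type*} [NormedAddCommGroup G] [NormedSpace ℝ G]

lemma aux_weak_mem {s : Set G} (hconv : Convex ℝ s) (hcl : IsClosed s) {u : ℕ → G} {u₀ : G}
    (hu : ∀ k, u k ∈ s)
    (hw : ∀ f : G →L[ℝ] ℝ, Tendsto (fun k => f (u k)) atTop (𝓝 (f u₀))) : u₀ ∈ s := by
  by_contra hx
  obtain ⟨f, r, hr1, hr2⟩ := geometric_hahn_banach_point_closed hconv hcl hx
  have h2 := ge_of_tendsto (hw f) (Eventually.of_forall fun k => (hr2 _ (hu k)).le)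
  linarith

lemma weakSeq_functional {H : Type*} [NormedAddCommGroup H] [InnerProductSpace ℝ H]
    [CompleteSpace H] {x : ℕ → H} {x₀ : H} (hw : WeakSeqTendsto x x₀) (f : H →L[ℝ] ℝ) :
    Tendsto (fun k => f (x k)) atTop (𝓝 (f x₀)) := by
  set g := (InnerProductSpace.toDual ℝ H).symm f with hg
  have hfy : ∀ y : H, f y = inner ℝ y g := by
    intro y
    have : (InnerProductSpace.toDual ℝ H) g y = inner ℝ g y := InnerProductSpace.toDual_apply_apply
    rw [hg] at this
    simp only [LinearIsometryEquiv.apply_symm_apply] at this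
    rw [this, real_inner_comm]
  simpa only [hfy] using hw g

lemma quad_small {t lam B K : ℝ} (ht : 0 ≤ t) (hlam : 0 < lam) (hB : 0 ≤ B) (hK : 0 ≤ K)
    (h : t ^ 2 / (2 * lam) ≤ B + K * t) : t ≤ 4 * lam * K + 2 * Real.sqrt (lam * B) := by
  have h2 : t ^ 2 ≤ 2 * lam * B + 2 * lam * K * t := by
    have := (div_le_iff₀ (by positivity : (0:ℝ) < 2 * lam)).1 h
    nlinarith
  have hs : 0 ≤ Real.sqrt (lam * B) := Real.sqrt_nonneg _
  rcases le_or_gt t (4 * lam * K) with h3 | h3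
  · linarith
  · have h4 : 2 * lam * K * t ≤ t ^ 2 / 2 := by nlinarith
    have h5 : t ^ 2 ≤ 4 * (lam * B) := by linarith
    have h6 : t ^ 2 ≤ (2 * Real.sqrt (lam * B)) ^ 2 := by
      rw [mul_pow, Real.sq_sqrt (by positivity)]
      linarith
    have h7 : Real.sqrt (t ^ 2) ≤ Real.sqrt ((2 * Real.sqrt (lam * B)) ^ 2) :=
      Real.sqrt_le_sqrt h6
    rw [Real.sqrt_sq ht, Real.sqrt_sq (by positivity)] at h7
    have h8 : (0:ℝ) ≤ 4 * lam * K := by positivity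
    linarith

end Aux

section Minorant

variable {G : Type*} [NormedAddCommGroup G] [NormedSpace ℝ G]

lemma exists_affine_minorant (ψ : G → EReal) (hbot : ∀ x, ψ x ≠ ⊥) {x₀ : G} (h₀ : ψ x₀ ≠ ⊤)
    (hconv : ∀ x y : G, ∀ t : ℝ, 0 ≤ t → t ≤ 1 →
      ψ (t • x + (1 - t) • y) ≤ (t : EReal) * ψ x + ((1 - t : ℝ) : EReal) * ψ y)
    (hlsc : LowerSemicontinuous ψ) :
    ∃ (L : G →L[ℝ] ℝ) (c : ℝ), ∀ u : G, ((L u + c : ℝ) : EReal) ≤ ψ u := by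
  classical
  set Ep : Set (G × ℝ) := {q | ψ q.1 ≤ (q.2 : EReal)} with hEp
  -- closedness
  have hclosed : IsClosed Ep := by
    rw [← isOpen_compl_iff]
    have : Epᶜ = ⋃ r : ℝ, ({u : G | (r : EReal) < ψ u} ×ˢ Set.Iio r) := by
      ext q
      simp only [Set.mem_compl_iff, hEp, Set.mem_setOf_eq, not_le, Set.mem_iUnion,
        Set.mem_prod, Set.mem_Iio]
      constructor
      · intro hq
        obtain ⟨r, hr1, hr2⟩ := EReal.exists_between_coe_real hq
        exact ⟨r, hr2, by exact_mod_cast hr1⟩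
      · rintro ⟨r, hr1, hr2⟩
        exact lt_trans (by exact_mod_cast hr2) hr1
    rw [this]
    exact isOpen_iUnion fun r =>
      ((hlsc.isOpen_preimage _).prod isOpen_Iio)
  -- convexity
  have hconvEp : Convex ℝ Ep := by
    intro q hq q' hq' a b ha hb hab
    simp only [hEp, Set.mem_setOf_eq] at hq hq' ⊢
    have hqt : ψ q.1 ≠ ⊤ := fun hh => by simp [hh] at hq
    have hq't : ψ q'.1 ≠ ⊤ := fun hh => by simp [hh] at hq'
    set r1 := (ψ q.1).toReal with hr1
    set r2 := (ψ q'.1).toReal with hr2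
    have e1 : ψ q.1 = (r1 : EReal) := (EReal.coe_toReal hqt (hbot _)).symm
    have e2 : ψ q'.1 = (r2 : EReal) := (EReal.coe_toReal hq't (hbot _)).symm
    have hb' : b = 1 - a := by linarith
    have key := hconv q.1 q'.1 a ha (by linarith)
    rw [e1, e2] at key
    have key2 : ψ (a • q.1 + (1 - a) • q'.1) ≤ ((a * r1 + (1 - a) * r2 : ℝ) : EReal) := by
      refine key.trans_eq ?_
      rw [← EReal.coe_mul, ← EReal.coe_mul, ← EReal.coe_add]
    have hle1 : r1 ≤ q.2 := by rw [e1] at hq; exact_mod_cast hq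
    have hle2 : r2 ≤ q'.2 := by rw [e2] at hq'; exact_mod_cast hq'
    have : (a • q + b • q').1 = a • q.1 + (1 - a) • q'.1 := by
      simp [Prod.smul_def, hb']
    rw [this]
    refine key2.trans ?_
    have : (a • q + b • q').2 = a * q.2 + (1 - a) * q'.2 := by
      simp [Prod.smul_def, hb', smul_eq_mul]
    rw [this]
    have : a * r1 + (1 - a) * r2 ≤ a * q.2 + (1 - a) * q'.2 := by
      have h1 : a * r1 ≤ a * q.2 := mul_le_mul_of_nonneg_left hle1 ha
      have h2 : (1 - a) * r2 ≤ (1 - a) * q'.2 := mul_le_mul_of_nonneg_left hle2 (by linarith)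
      linarith
    exact_mod_cast this
  -- the point outside
  set r₀ := (ψ x₀).toReal with hr₀
  have e₀ : ψ x₀ = (r₀ : EReal) := (EReal.coe_toReal h₀ (hbot _)).symm
  have hnotmem : (x₀, r₀ - 1) ∉ Ep := by
    simp only [hEp, Set.mem_setOf_eq, e₀, not_le]
    exact_mod_cast sub_one_lt r₀
  obtain ⟨f, s, hfs, hsep⟩ := geometric_hahn_banach_point_closed hconvEp hclosed hnotmem
  set β := f ((0 : G), (1 : ℝ)) with hβ
  have hdec : ∀ (u : G) (t : ℝ), f (u, t) = f (u, 0) + t * β := by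
    intro u t
    have : (u, t) = (u, (0:ℝ)) + t • ((0:G), (1:ℝ)) := by
      simp [Prod.ext_iff]
    rw [this, map_add, _root_.map_smul]
    simp [hβ, smul_eq_mul]
  have hmem₀ : (x₀, r₀) ∈ Ep := by
    simp only [hEp, Set.mem_setOf_eq, e₀]; exact le_refl _
  have hβpos : 0 < β := by
    have h1 := hsep _ hmem₀
    rw [hdec] at h1 hfs
    nlinarith
  refine ⟨(-β⁻¹) • (f.comp (ContinuousLinearMap.inl ℝ G ℝ)), s * β⁻¹, ?_⟩
  intro u
  by_cases hu : ψ u = ⊤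
  · rw [hu]; exact le_top
  · set ru := (ψ u).toReal with hru
    have eu : ψ u = (ru : EReal) := (EReal.coe_toReal hu (hbot _)).symm
    have hmem : (u, ru) ∈ Ep := by simp only [hEp, Set.mem_setOf_eq, eu]; exact le_refl _
    have h1 := hsep _ hmem
    rw [hdec] at h1
    have happ : ((-β⁻¹) • (f.comp (ContinuousLinearMap.inl ℝ G ℝ))) u = -β⁻¹ * f (u, 0) := by
      simp [ContinuousLinearMap.smul_apply, ContinuousLinearMap.comp_apply,
        ContinuousLinearMap.inl_apply, smul_eq_mul]
    rw [happ, eu]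
    have : -β⁻¹ * f (u, 0) + s * β⁻¹ ≤ ru := by
      have hβ' : 0 < β⁻¹ := inv_pos.2 hβpos
      have := mul_le_mul_of_nonneg_left h1.le hβ'.le
      have hcan : β⁻¹ * (ru * β) = ru := by field_simp
      nlinarith
    exact_mod_cast this

end Minorant

section Key

variable {H : Type*} [NormedAddCommGroup H] [InnerProductSpace ℝ H] [CompleteSpace H]

lemma key_psi (ψ : H → EReal) (hbot : ∀ x, ψ x ≠ ⊥)
    (hsub : ∀ α : ℝ, Convex ℝ {u | ψ u ≤ (α : EReal)} ∧ IsClosed {u | ψ u ≤ (α : EReal)})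
    (L : H →L[ℝ] ℝ) (c : ℝ) (hminor : ∀ u, ((L u + c : ℝ) : EReal) ≤ ψ u)
    (lam : ℕ → ℝ) (hpos : ∀ k, 0 < lam k) (hlam0 : Tendsto lam atTop (𝓝 0))
    (x : ℕ → H) (x₀ : H) (hw : WeakSeqTendsto x x₀)
    (a : ℝ) (hle : ∀ k, eMoreauEnv ψ (lam k) (x k) ≤ (a : EReal)) :
    ψ x₀ ≤ (a : EReal) := by
  classical
  have hchoice : ∀ k, ∃ z : H, ψ z + ((‖x k - z‖ ^ 2 / (2 * lam k) : ℝ) : EReal)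
      < ((a + lam k : ℝ) : EReal) := by
    intro k
    have h1 : eMoreauEnv ψ (lam k) (x k) < ((a + lam k : ℝ) : EReal) :=
      lt_of_le_of_lt (hle k) (by exact_mod_cast lt_add_of_pos_right a (hpos k))
    exact iInf_lt_iff.1 h1
  choose z hz using hchoice
  set t : ℕ → ℝ := fun k => ‖x k - z k‖ with ht
  set q : ℕ → ℝ := fun k => t k ^ 2 / (2 * lam k) with hq
  have hzt : ∀ k, ψ (z k) ≠ ⊤ := by
    intro k hk
    have := hz k
    rw [hk] at this
    simp [EReal.top_add_of_ne_bot] at this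
  set r : ℕ → ℝ := fun k => (ψ (z k)).toReal with hr
  have hze : ∀ k, ψ (z k) = ((r k : ℝ) : EReal) := fun k =>
    (EReal.coe_toReal (hzt k) (hbot _)).symm
  have hrq : ∀ k, r k + q k < a + lam k := by
    intro k
    have := hz k
    rw [hze k, ← EReal.coe_add] at this
    exact_mod_cast this
  have hminr : ∀ k, L (z k) + c ≤ r k := by
    intro k
    have := hminor (z k)
    rw [hze k] at this
    exact_mod_cast this
  have hLz : ∀ k, L (x k) - ‖L‖ * t k ≤ L (z k) := by
    intro k
    have h1 : L (x k) - L (z k) = L (x k - z k) := by rw [map_sub]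
    have h2 : L (x k - z k) ≤ ‖L‖ * t k := le_trans (le_abs_self _)
      (by simpa [ht] using L.le_opNorm (x k - z k))
    linarith [h1 ▸ h2]
  -- bound for the quadratic term
  have htend : Tendsto (fun k => a + lam k - c - L (x k)) atTop (𝓝 (a + 0 - c - L x₀)) :=
    (((tendsto_const_nhds.add hlam0).sub tendsto_const_nhds).sub (weakSeq_functional hw L))
  obtain ⟨B, hB⟩ := htend.bddAbove_range
  set B' : ℝ := max B 0 with hB'
  have hqB : ∀ k, q k ≤ B' + ‖L‖ * t k := by
    intro k
    have h1 : q k ≤ a + lam k - r k := by linarith [hrq k, sq_nonneg (t k)]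
    have h2 := hminr k
    have h3 := hLz k
    have h4 : a + lam k - c - L (x k) ≤ B := hB (Set.mem_range_self k)
    have : q k ≤ a + lam k - c - L (z k) := by linarith
    have : q k ≤ a + lam k - c - L (x k) + ‖L‖ * t k := by linarith
    refine this.trans ?_
    have : a + lam k - c - L (x k) ≤ B' := h4.trans (le_max_left _ _)
    linarith
  have htb : ∀ k, t k ≤ 4 * lam k * ‖L‖ + 2 * Real.sqrt (lam k * B') := by
    intro k
    exact quad_small (norm_nonneg _) (hpos k) (le_max_right _ _) (norm_nonneg L)
      (by simpa [hq] using hqB k)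
  have ht0 : Tendsto t atTop (𝓝 0) := by
    have hb1 : Tendsto (fun k => 4 * lam k * ‖L‖ + 2 * Real.sqrt (lam k * B')) atTop
        (𝓝 (4 * 0 * ‖L‖ + 2 * Real.sqrt (0 * B'))) := by
      refine Tendsto.add ((tendsto_const_nhds.mul hlam0).mul_const _) ?_
      exact (tendsto_const_nhds.mul
        ((Real.continuous_sqrt.tendsto _).comp (hlam0.mul_const B')))
    simp only [mul_zero, zero_mul, Real.sqrt_zero, add_zero] at hb1
    exact squeeze_zero (fun k => norm_nonneg _) htb hb1
  -- weak convergence of z to x₀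
  have hzw : ∀ f : H →L[ℝ] ℝ, Tendsto (fun k => f (z k)) atTop (𝓝 (f x₀)) := by
    intro f
    have h1 : Tendsto (fun k => f (x k - z k)) atTop (𝓝 0) := by
      refine squeeze_zero_norm (fun k => ?_) (by simpa using ht0.const_mul ‖f‖)
      simpa [ht] using f.le_opNorm (x k - z k)
    have h2 : Tendsto (fun k => f (x k) - f (x k - z k)) atTop (𝓝 (f x₀ - 0)) :=
      (weakSeq_functional hw f).sub h1
    simp only [sub_zero] at h2
    refine h2.congr fun k => ?_
    rw [map_sub]; ring
  -- pass to sublevel sets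
  have hαmem : ∀ α : ℝ, a < α → ψ x₀ ≤ (α : EReal) := by
    intro α hα
    have hev : ∀ᶠ k in atTop, ψ (z k) ≤ (α : EReal) := by
      have hev1 : ∀ᶠ k in atTop, lam k < α - a :=
        hlam0.eventually (gt_mem_nhds (by linarith))
      filter_upwards [hev1] with k hk
      rw [hze k]
      have h1 : q k ≥ 0 := by
        have h2 := sq_nonneg (t k)
        have h3 := hpos k
        exact div_nonneg h2 (by linarith)
      have : r k ≤ α := by linarith [hrq k]
      exact_mod_cast this
    obtain ⟨N, hN⟩ := eventually_atTop.1 hev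
    refine aux_weak_mem (hsub α).1 (hsub α).2 (u := fun j => z (j + N)) (u₀ := x₀)
      (fun j => hN (j + N) (Nat.le_add_left _ _)) ?_
    intro f
    exact (hzw f).comp (tendsto_add_atTop_nat N)
  by_contra hlt
  push_neg at hlt
  obtain ⟨α, hα1, hα2⟩ := EReal.exists_between_coe_real hlt
  exact absurd (hαmem α (by exact_mod_cast hα1)) (not_le.2 hα2)

end Key

section KeyF

variable {H E : Type*} [NormedAddCommGroup H] [InnerProductSpace ℝ H] [CompleteSpace H]
  [NormedAddCommGroup E] [InnerProductSpace ℝ E] [CompleteSpace E]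

lemma key_F (S : H → E → ℝ)
    (hsub : ∀ α : ℝ, Convex ℝ {u : H × E | S u.1 u.2 ≤ α}
      ∧ IsClosed {u : H × E | S u.1 u.2 ≤ α})
    (L : (H × E) →L[ℝ] ℝ) (c : ℝ) (hminor : ∀ u : H × E, L u + c ≤ S u.1 u.2)
    (lam : ℕ → ℝ) (hpos : ∀ k, 0 < lam k) (hlam0 : Tendsto lam atTop (𝓝 0))
    (x : ℕ → H) (x₀ : H) (hw : WeakSeqTendsto x x₀) (z : E)
    (β : ℕ → ℝ) (b : ℝ) (hβ : Tendsto β atTop (𝓝 b))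
    (hle : ∀ k, moreauEnv2 S (lam k) (x k) z ≤ β k) :
    S x₀ z ≤ b := by
  classical
  have hchoice : ∀ k, ∃ u : H × E,
      S u.1 u.2 + (‖x k - u.1‖ ^ 2 + ‖z - u.2‖ ^ 2) / (2 * lam k) < β k + lam k := by
    intro k
    have h1 : moreauEnv2 S (lam k) (x k) z < β k + lam k :=
      lt_of_le_of_lt (hle k) (lt_add_of_pos_right _ (hpos k))
    exact exists_lt_of_ciInf_lt h1
  choose u hu using hchoice
  set w : ℕ → H × E := fun k => (x k, z) with hwdef
  set t : ℕ → ℝ := fun k => ‖w k - u k‖ with ht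
  have hts : ∀ k, t k ^ 2 ≤ ‖x k - (u k).1‖ ^ 2 + ‖z - (u k).2‖ ^ 2 := by
    intro k
    have h1 : t k = max ‖x k - (u k).1‖ ‖z - (u k).2‖ := by
      simp [ht, hwdef, Prod.norm_def, Prod.fst_sub, Prod.snd_sub]
    rw [h1]
    rcases max_cases ‖x k - (u k).1‖ ‖z - (u k).2‖ with ⟨he, _⟩ | ⟨he, _⟩ <;> rw [he] <;>
      nlinarith [sq_nonneg ‖x k - (u k).1‖, sq_nonneg ‖z - (u k).2‖]
  have hsnn : ∀ k, (0:ℝ) ≤ ‖x k - (u k).1‖ ^ 2 + ‖z - (u k).2‖ ^ 2 := fun k => by positivity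
  have hLu : ∀ k, L (w k) - ‖L‖ * t k ≤ L (u k) := by
    intro k
    have h1 : L (w k) - L (u k) = L (w k - u k) := by rw [map_sub]
    have h2 : L (w k - u k) ≤ ‖L‖ * t k := le_trans (le_abs_self _)
      (by simpa [ht] using L.le_opNorm (w k - u k))
    linarith [h1 ▸ h2]
  have hwfun : ∀ f : (H × E) →L[ℝ] ℝ, Tendsto (fun k => f (w k)) atTop (𝓝 (f (x₀, z))) := by
    intro f
    have hdec : ∀ v : H, f (v, z) = f.comp (ContinuousLinearMap.inl ℝ H E) v + f (0, z) := by
      intro v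
      have hv : (v, z) = ((v, 0) : H × E) + (0, z) := by simp
      rw [hv, map_add, ContinuousLinearMap.comp_apply, ContinuousLinearMap.inl_apply]
    have heq : (fun k => f (w k)) = fun k =>
        f.comp (ContinuousLinearMap.inl ℝ H E) (x k) + f (0, z) := funext fun k => hdec (x k)
    rw [heq, hdec x₀]
    exact (weakSeq_functional hw (f.comp (ContinuousLinearMap.inl ℝ H E))).add_const _
  have htend : Tendsto (fun k => β k + lam k - c - L (w k)) atTop
      (𝓝 (b + 0 - c - L (x₀, z))) := ((hβ.add hlam0).sub tendsto_const_nhds).sub (hwfun L)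
  obtain ⟨B, hB⟩ := htend.bddAbove_range
  set B' : ℝ := max B 0 with hB'
  have hqB : ∀ k, t k ^ 2 / (2 * lam k) ≤ B' + ‖L‖ * t k := by
    intro k
    have h1 : t k ^ 2 / (2 * lam k) ≤
        (‖x k - (u k).1‖ ^ 2 + ‖z - (u k).2‖ ^ 2) / (2 * lam k) :=
      (div_le_div_iff_of_pos_right (by linarith [hpos k])).2 (hts k)
    have h2 : c + L (u k) ≤ S (u k).1 (u k).2 := by linarith [hminor (u k)]
    have h3 := hLu k
    have h0 : (‖x k - (u k).1‖ ^ 2 + ‖z - (u k).2‖ ^ 2) / (2 * lam k) ≤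
        β k + lam k - S (u k).1 (u k).2 := by linarith [hu k]
    have h4 : β k + lam k - c - L (w k) ≤ B := hB (Set.mem_range_self k)
    have h5 : β k + lam k - c - L (w k) ≤ B' := h4.trans (le_max_left _ _)
    linarith
  have htb : ∀ k, t k ≤ 4 * lam k * ‖L‖ + 2 * Real.sqrt (lam k * B') :=
    fun k => quad_small (norm_nonneg _) (hpos k) (le_max_right _ _) (norm_nonneg L) (hqB k)
  have ht0 : Tendsto t atTop (𝓝 0) := by
    have hb1 : Tendsto (fun k => 4 * lam k * ‖L‖ + 2 * Real.sqrt (lam k * B')) atTop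
        (𝓝 (4 * 0 * ‖L‖ + 2 * Real.sqrt (0 * B'))) := by
      refine Tendsto.add ((tendsto_const_nhds.mul hlam0).mul_const _) ?_
      exact (tendsto_const_nhds.mul
        ((Real.continuous_sqrt.tendsto _).comp (hlam0.mul_const B')))
    simp only [mul_zero, zero_mul, Real.sqrt_zero, add_zero] at hb1
    exact squeeze_zero (fun k => norm_nonneg _) htb hb1
  have huw : ∀ f : (H × E) →L[ℝ] ℝ, Tendsto (fun k => f (u k)) atTop (𝓝 (f (x₀, z))) := by
    intro f
    have h1 : Tendsto (fun k => f (w k - u k)) atTop (𝓝 0) := by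
      refine squeeze_zero_norm (fun k => ?_) (by simpa using ht0.const_mul ‖f‖)
      simpa [ht] using f.le_opNorm (w k - u k)
    have h2 := (hwfun f).sub h1
    simp only [sub_zero] at h2
    refine h2.congr fun k => ?_
    rw [map_sub]; ring
  have hαmem : ∀ α : ℝ, b < α → S x₀ z ≤ α := by
    intro α hα
    have hev : ∀ᶠ k in atTop, S (u k).1 (u k).2 ≤ α := by
      have hβl : Tendsto (fun k => β k + lam k) atTop (𝓝 b) := by
        have := hβ.add hlam0
        rwa [add_zero] at this
      have hev1 : ∀ᶠ k in atTop, β k + lam k < α := hβl.eventually (gt_mem_nhds hα)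
      filter_upwards [hev1] with k hk
      have h1 : 0 ≤ (‖x k - (u k).1‖ ^ 2 + ‖z - (u k).2‖ ^ 2) / (2 * lam k) :=
        div_nonneg (hsnn k) (by linarith [hpos k])
      linarith [hu k]
    obtain ⟨N, hN⟩ := eventually_atTop.1 hev
    refine aux_weak_mem (hsub α).1 (hsub α).2 (u := fun j => u (j + N)) (u₀ := (x₀, z))
      (fun j => hN (j + N) (Nat.le_add_left _ _)) ?_
    intro f
    exact (huw f).comp (tendsto_add_atTop_nat N)
  by_contra hlt
  push_neg at hlt
  obtain ⟨α, hα1, hα2⟩ := exists_between hlt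
  exact absurd (hαmem α hα1) (not_le.2 hα2)

end KeyF

/-- Theorem 5.1(b), weak convergence of minimizers: if `x_{λ_k}` minimizes `M_{λ_k}ψ`
over `M_{λ_k}(p)` and `x_{λ_k} ⇀ x₀` weakly, then `x₀` minimizes `ψ` over `M(p)` and
`M_{λ_k}ψ(x_{λ_k}) → ψ(x₀)`. -/
theorem stmt16
    {H Y : Type*} [NormedAddCommGroup H] [InnerProductSpace ℝ H] [CompleteSpace H]
    [SecondCountableTopology H]
    [NormedAddCommGroup Y] [NormedSpace ℝ Y] [CompleteSpace Y] {m : ℕ}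
    {Ω : Type*} [MeasurableSpace Ω] (P : Measure Ω) [IsProbabilityMeasure P]
    (ξ : Ω → EuclideanSpace ℝ (Fin m)) (hξ : Measurable ξ)
    (hlaw : P.map ξ ≪ volume)
    (K : Set Y) (hKne : K.Nonempty) (hKcl : IsClosed K) (hKconv : Convex ℝ K)
    (hKcone : ∀ c : ℝ, 0 ≤ c → ∀ y ∈ K, c • y ∈ K)
    (C : Set (WeakDual ℝ Y)) (hCne : C.Nonempty) (hCconv : Convex ℝ C) (hCcpt : IsCompact C)
    (hCgen : closure {w : WeakDual ℝ Y | ∃ c : ℝ, 0 ≤ c ∧ ∃ v ∈ C, w = c • v}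
      = {w : WeakDual ℝ Y | ∀ y ∈ K, 0 ≤ w y})
    (Φ : H → EuclideanSpace ℝ (Fin m) → Y)
    (hΦ : Continuous fun q : H × EuclideanSpace ℝ (Fin m) => Φ q.1 q.2)
    (h : H → ℝ) (hconv : ConvexOn ℝ Set.univ h) (hC1 : ContDiff ℝ 1 h)
    (hscal : ∀ v ∈ C, ConvexOn ℝ Set.univ
      (fun q : H × EuclideanSpace ℝ (Fin m) => v (Φ q.1 q.2) + h q.1))
    (S : H → EuclideanSpace ℝ (Fin m) → ℝ)
    (hS : ∀ x z, S x z = ⨆ v : C, ((v : WeakDual ℝ Y) (Φ x z) + h x))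
    (φ : H → ℝ)
    (hφ : ∀ x, φ x = (P {ω | S x (ξ ω) ≤ h x}).toReal)
    (φl : ℝ → H → ℝ)
    (hφl : ∀ lam x, φl lam x = (P {ω | moreauEnv2 S lam x (ξ ω) ≤ h x}).toReal)
    (hwk : ∀ (x : ℕ → H) (x₀ : H), WeakSeqTendsto x x₀ →
      Tendsto (fun k => h (x k)) atTop (𝓝 (h x₀)))
    (p : ℝ) (hp : p ∈ Set.Icc (0 : ℝ) 1)
    (ψ : H → EReal)
    (hψbot : ∀ x, ψ x ≠ ⊥) (hψproper : ∃ x, ψ x ≠ ⊤)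
    (hψconv : ∀ x y : H, ∀ t : ℝ, 0 ≤ t → t ≤ 1 →
      ψ (t • x + (1 - t) • y) ≤ (t : EReal) * ψ x + ((1 - t : ℝ) : EReal) * ψ y)
    (hψlsc : LowerSemicontinuous ψ)
    (hψcoer : ∀ α : ℝ, Bornology.IsBounded {x | ψ x ≤ (α : EReal)})
    (hfeas : ∃ x : H, p ≤ φ x ∧ ψ x ≠ ⊤) :
    ∀ lam : ℕ → ℝ, (∀ k, 0 < lam k) → Tendsto lam atTop (𝓝 0) →
    ∀ (x : ℕ → H) (x₀ : H),
      (∀ k, p ≤ φl (lam k) (x k)) →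
      (∀ k, ∀ y : H, p ≤ φl (lam k) y →
        eMoreauEnv ψ (lam k) (x k) ≤ eMoreauEnv ψ (lam k) y) →
      WeakSeqTendsto x x₀ →
      ((p ≤ φ x₀ ∧ ∀ y : H, p ≤ φ y → ψ x₀ ≤ ψ y) ∧
        Tendsto (fun k => eMoreauEnv ψ (lam k) (x k)) atTop (𝓝 (ψ x₀))) := by
  classical
  obtain ⟨hp0, hp1⟩ := hp
  intro lam hpos hlam0 x x₀ hxfeas hxmin hw
  have hCsub : Nonempty C := hCne.to_subtype
  -- boundedness of the sup family
  have hbdd : ∀ (xx : H) (zz : EuclideanSpace ℝ (Fin m)),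
      BddAbove (Set.range fun v : C => ((v : WeakDual ℝ Y) (Φ xx zz) + h xx)) := by
    intro xx zz
    have hcont : Continuous fun v : WeakDual ℝ Y => v (Φ xx zz) + h xx :=
      (WeakDual.eval_continuous _).add continuous_const
    have himg := (hCcpt.image hcont).bddAbove
    rwa [Set.image_eq_range] at himg
  have hSle : ∀ (v : C) (xx : H) (zz : EuclideanSpace ℝ (Fin m)),
      (v : WeakDual ℝ Y) (Φ xx zz) + h xx ≤ S xx zz := by
    intro v xx zz
    rw [hS]
    exact le_ciSup (hbdd xx zz) v
  -- joint convexity of S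
  have hSconv : ∀ (q1 q2 : H × EuclideanSpace ℝ (Fin m)) (a : ℝ), 0 ≤ a → a ≤ 1 →
      S (a • q1 + (1 - a) • q2).1 (a • q1 + (1 - a) • q2).2
        ≤ a * S q1.1 q1.2 + (1 - a) * S q2.1 q2.2 := by
    intro q1 q2 a ha ha1
    rw [hS]
    refine ciSup_le fun v => ?_
    have hcv := (hscal v v.2).2 (Set.mem_univ q1) (Set.mem_univ q2) ha
      (by linarith : (0:ℝ) ≤ 1 - a) (by ring)
    simp only [smul_eq_mul] at hcv
    refine hcv.trans ?_
    have h1 : (v : WeakDual ℝ Y) (Φ q1.1 q1.2) + h q1.1 ≤ S q1.1 q1.2 := hSle v _ _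
    have h2 : (v : WeakDual ℝ Y) (Φ q2.1 q2.2) + h q2.1 ≤ S q2.1 q2.2 := hSle v _ _
    have := mul_le_mul_of_nonneg_left h1 ha
    have := mul_le_mul_of_nonneg_left h2 (by linarith : (0:ℝ) ≤ 1 - a)
    linarith
  -- lower semicontinuity of S
  have hSlsc : LowerSemicontinuous
      (fun q : H × EuclideanSpace ℝ (Fin m) => S q.1 q.2) := by
    intro q y hy
    simp only at hy
    rw [hS] at hy
    obtain ⟨v, hv⟩ := exists_lt_of_lt_ciSup hy
    have hcont : Continuous fun q' : H × EuclideanSpace ℝ (Fin m) =>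
        (v : WeakDual ℝ Y) (Φ q'.1 q'.2) + h q'.1 :=
      ((map_continuous (v : WeakDual ℝ Y)).comp hΦ).add (hC1.continuous.comp continuous_fst)
    filter_upwards [(hcont.tendsto q).eventually (lt_mem_nhds hv)] with q' hq'
    exact lt_of_lt_of_le hq' (hSle v _ _)
  -- sublevel sets of S
  have hFsub : ∀ α : ℝ, Convex ℝ {q : H × EuclideanSpace ℝ (Fin m) | S q.1 q.2 ≤ α}
      ∧ IsClosed {q : H × EuclideanSpace ℝ (Fin m) | S q.1 q.2 ≤ α} := by
    intro α
    constructor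
    · intro q hq q' hq' a b ha hb hab
      have hb' : b = 1 - a := by linarith
      subst hb'
      have h1 := hSconv q q' a ha (by linarith)
      have h2 : a * S q.1 q.2 ≤ a * α := mul_le_mul_of_nonneg_left hq ha
      have h3 : (1 - a) * S q'.1 q'.2 ≤ (1 - a) * α :=
        mul_le_mul_of_nonneg_left hq' (by linarith)
      simp only [Set.mem_setOf_eq]
      nlinarith
    · exact hSlsc.isClosed_preimage α
  -- affine minorant of S
  obtain ⟨LF, cF, hLF⟩ := exists_affine_minorant
    (G := H × EuclideanSpace ℝ (Fin m))
    (fun q => ((S q.1 q.2 : ℝ) : EReal)) (fun q => EReal.coe_ne_bot _)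
    (x₀ := (0, 0)) (EReal.coe_ne_top _)
    (by
      intro q1 q2 a ha ha1
      have h1 := hSconv q1 q2 a ha ha1
      have h2 : ((S (a • q1 + (1 - a) • q2).1 (a • q1 + (1 - a) • q2).2 : ℝ) : EReal)
          ≤ ((a * S q1.1 q1.2 + (1 - a) * S q2.1 q2.2 : ℝ) : EReal) := EReal.coe_le_coe_iff.2 h1
      refine h2.trans_eq ?_
      rw [EReal.coe_add, EReal.coe_mul, EReal.coe_mul])
    (by
      have := continuous_coe_real_ereal.comp_lowerSemicontinuous hSlsc
        (EReal.coe_strictMono.monotone)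
      exact this)
  have hminorF : ∀ q : H × EuclideanSpace ℝ (Fin m), LF q + cF ≤ S q.1 q.2 := by
    intro q
    have := hLF q
    exact_mod_cast this
  -- bddBelow of the Moreau infimand, and monotonicity of the envelope
  have hsq : ∀ (q u : H × EuclideanSpace ℝ (Fin m)),
      ‖q - u‖ ^ 2 ≤ ‖q.1 - u.1‖ ^ 2 + ‖q.2 - u.2‖ ^ 2 := by
    intro q u
    have h1 : ‖q - u‖ = max ‖q.1 - u.1‖ ‖q.2 - u.2‖ := by
      simp [Prod.norm_def, Prod.fst_sub, Prod.snd_sub]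
    rw [h1]
    rcases max_cases ‖q.1 - u.1‖ ‖q.2 - u.2‖ with ⟨he, _⟩ | ⟨he, _⟩ <;> rw [he] <;>
      nlinarith [sq_nonneg ‖q.1 - u.1‖, sq_nonneg ‖q.2 - u.2‖]
  have hquadlow : ∀ (l : ℝ), 0 < l → ∀ (q u : H × EuclideanSpace ℝ (Fin m)),
      cF + LF q - l * ‖LF‖ ^ 2 / 2
        ≤ S u.1 u.2 + (‖q.1 - u.1‖ ^ 2 + ‖q.2 - u.2‖ ^ 2) / (2 * l) := by
    intro l hl q u
    have h1 : LF u + cF ≤ S u.1 u.2 := hminorF u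
    set tt : ℝ := ‖q - u‖ with htt
    have h2 : LF q - ‖LF‖ * tt ≤ LF u := by
      have ha : LF q - LF u = LF (q - u) := by rw [map_sub]
      have hb : LF (q - u) ≤ ‖LF‖ * tt := le_trans (le_abs_self _)
        (by simpa [htt] using LF.le_opNorm (q - u))
      linarith [ha ▸ hb]
    have h3 : tt ^ 2 ≤ ‖q.1 - u.1‖ ^ 2 + ‖q.2 - u.2‖ ^ 2 := hsq q u
    have h4 : tt ^ 2 / (2 * l) ≤ (‖q.1 - u.1‖ ^ 2 + ‖q.2 - u.2‖ ^ 2) / (2 * l) :=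
      (div_le_div_iff_of_pos_right (by linarith)).2 h3
    have h5 : 2 * l * ‖LF‖ * tt - l ^ 2 * ‖LF‖ ^ 2 ≤ tt ^ 2 := by
      nlinarith [sq_nonneg (tt - l * ‖LF‖)]
    have h6 : (2 * l * ‖LF‖ * tt - l ^ 2 * ‖LF‖ ^ 2) / (2 * l) ≤ tt ^ 2 / (2 * l) :=
      (div_le_div_iff_of_pos_right (by linarith)).2 h5
    have h7 : (2 * l * ‖LF‖ * tt - l ^ 2 * ‖LF‖ ^ 2) / (2 * l)
        = ‖LF‖ * tt - l * ‖LF‖ ^ 2 / 2 := by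
      field_simp
    rw [h7] at h6
    linarith
  have hbddBelow : ∀ (l : ℝ), 0 < l → ∀ (xx : H) (zz : EuclideanSpace ℝ (Fin m)),
      BddBelow (Set.range fun u : H × EuclideanSpace ℝ (Fin m) =>
        S u.1 u.2 + (‖xx - u.1‖ ^ 2 + ‖zz - u.2‖ ^ 2) / (2 * l)) := by
    intro l hl xx zz
    refine ⟨cF + LF (xx, zz) - l * ‖LF‖ ^ 2 / 2, ?_⟩
    rintro y ⟨u, rfl⟩
    exact hquadlow l hl (xx, zz) u
  have hMono : ∀ (l : ℝ), 0 < l → ∀ (xx : H) (zz : EuclideanSpace ℝ (Fin m)),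
      moreauEnv2 S l xx zz ≤ S xx zz := by
    intro l hl xx zz
    have h1 := ciInf_le (hbddBelow l hl xx zz) (xx, zz)
    simpa [moreauEnv2] using h1
  have hφle : ∀ (l : ℝ), 0 < l → ∀ xx : H, φ xx ≤ φl l xx := by
    intro l hl xx
    rw [hφ, hφl]
    have hset : {ω | S xx (ξ ω) ≤ h xx} ⊆ {ω | moreauEnv2 S l xx (ξ ω) ≤ h xx} :=
      fun ω hω => le_trans (hMono l hl xx (ξ ω)) hω
    exact ENNReal.toReal_mono (measure_ne_top P _) (measure_mono hset)
  -- Step 4 : feasibility of x₀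
  set A : ℕ → Set Ω := fun k => {ω | moreauEnv2 S (lam k) (x k) (ξ ω) ≤ h (x k)} with hA
  have hAmeas : ∀ k, MeasurableSet (A k) := by
    intro k
    have husc : ∀ r : ℝ,
        IsOpen {zz : EuclideanSpace ℝ (Fin m) | moreauEnv2 S (lam k) (x k) zz < r} := by
      intro r
      rw [isOpen_iff_mem_nhds]
      intro zz hzz
      have hzz' : (⨅ u : H × EuclideanSpace ℝ (Fin m),
          (S u.1 u.2 + (‖x k - u.1‖ ^ 2 + ‖zz - u.2‖ ^ 2) / (2 * lam k))) < r := hzz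
      obtain ⟨u, hu⟩ := exists_lt_of_ciInf_lt hzz'
      have hcont : Continuous fun zz' : EuclideanSpace ℝ (Fin m) =>
          S u.1 u.2 + (‖x k - u.1‖ ^ 2 + ‖zz' - u.2‖ ^ 2) / (2 * lam k) := by
        apply continuous_const.add
        apply Continuous.div_const
        apply continuous_const.add
        exact ((continuous_id.sub continuous_const).norm.pow 2)
      refine Filter.mem_of_superset ((hcont.tendsto zz).eventually (gt_mem_nhds hu)) ?_
      intro zz' hzz'
      have h1 := ciInf_le (hbddBelow (lam k) (hpos k) (x k) zz') u
      exact lt_of_le_of_lt h1 hzz'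
    have heq : A k = ξ ⁻¹' (⋂ n : ℕ,
        {zz | moreauEnv2 S (lam k) (x k) zz < h (x k) + 1 / (n + 1)}) := by
      ext ω
      simp only [hA, Set.mem_setOf_eq, Set.mem_preimage, Set.mem_iInter]
      constructor
      · intro hω n
        have : (0:ℝ) < 1 / (n + 1) := by positivity
        linarith
      · intro hω
        by_contra hc
        push_neg at hc
        obtain ⟨n, hn⟩ := exists_nat_one_div_lt (by linarith :
          (0:ℝ) < moreauEnv2 S (lam k) (x k) (ξ ω) - h (x k))
        have := hω n
        linarith
    rw [heq]
    exact hξ (MeasurableSet.iInter fun n => (husc _).measurableSet)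
  have hAp : ∀ k, ENNReal.ofReal p ≤ P (A k) := by
    intro k
    have h1 := hxfeas k
    rw [hφl] at h1
    calc ENNReal.ofReal p ≤ ENNReal.ofReal ((P (A k)).toReal) := ENNReal.ofReal_le_ofReal h1
      _ = P (A k) := ENNReal.ofReal_toReal (measure_ne_top P _)
  set U : ℕ → Set Ω := fun n => ⋃ k, ⋃ (_ : n ≤ k), A k with hU
  have hUmeas : ∀ n, MeasurableSet (U n) := fun n =>
    MeasurableSet.iUnion fun k => MeasurableSet.iUnion fun _ => hAmeas k
  have hUanti : Antitone U := by
    intro n n' hnn' ω hω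
    simp only [hU, Set.mem_iUnion] at hω ⊢
    obtain ⟨k, hk, hωk⟩ := hω
    exact ⟨k, le_trans hnn' hk, hωk⟩
  have hUp : ∀ n, ENNReal.ofReal p ≤ P (U n) := by
    intro n
    refine (hAp n).trans (measure_mono ?_)
    intro ω hω
    simp only [hU, Set.mem_iUnion]
    exact ⟨n, le_refl n, hω⟩
  have hIeq := hUanti.measure_iInter (μ := P)
    (fun n => (hUmeas n).nullMeasurableSet) ⟨0, measure_ne_top P _⟩
  have hIp : ENNReal.ofReal p ≤ P (⋂ n, U n) := by
    rw [hIeq]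
    exact le_iInf hUp
  have hsubA : (⋂ n, U n) ⊆ {ω | S x₀ (ξ ω) ≤ h x₀} := by
    intro ω hω
    have hfreq : ∃ᶠ k in atTop, ω ∈ A k := by
      rw [frequently_atTop]
      intro n
      have := Set.mem_iInter.1 hω n
      simp only [hU, Set.mem_iUnion] at this
      obtain ⟨k, hk, hωk⟩ := this
      exact ⟨k, hk, hωk⟩
    obtain ⟨φs, hφmono, hφprop⟩ := extraction_of_frequently_atTop hfreq
    exact key_F S hFsub LF cF hminorF (fun j => lam (φs j)) (fun j => hpos _)
      (hlam0.comp hφmono.tendsto_atTop) (fun j => x (φs j)) x₀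
      (fun y => (hw y).comp hφmono.tendsto_atTop) (ξ ω)
      (fun j => h (x (φs j))) (h x₀)
      ((hwk x x₀ hw).comp hφmono.tendsto_atTop) (fun j => hφprop j)
  have hx₀feas : p ≤ φ x₀ := by
    rw [hφ]
    have h1 : ENNReal.ofReal p ≤ P {ω | S x₀ (ξ ω) ≤ h x₀} :=
      hIp.trans (measure_mono hsubA)
    have h2 := ENNReal.toReal_mono (measure_ne_top P _) h1
    rwa [ENNReal.toReal_ofReal hp0] at h2
  -- ψ machinery
  obtain ⟨xbar, hxbar⟩ := hψproper
  obtain ⟨Lψ, cψ, hLψ⟩ := exists_affine_minorant ψ hψbot hxbar hψconv hψlsc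
  have hψsub : ∀ α : ℝ, Convex ℝ {u : H | ψ u ≤ (α : EReal)}
      ∧ IsClosed {u : H | ψ u ≤ (α : EReal)} := by
    intro α
    constructor
    · intro u hu v hv a b ha hb hab
      simp only [Set.mem_setOf_eq] at hu hv ⊢
      have hut : ψ u ≠ ⊤ := fun hh => by simp [hh] at hu
      have hvt : ψ v ≠ ⊤ := fun hh => by simp [hh] at hv
      have eu : ψ u = (((ψ u).toReal : ℝ) : EReal) := (EReal.coe_toReal hut (hψbot _)).symm
      have ev : ψ v = (((ψ v).toReal : ℝ) : EReal) := (EReal.coe_toReal hvt (hψbot _)).symm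
      have hb' : b = 1 - a := by linarith
      subst hb'
      have key := hψconv u v a ha (by linarith)
      rw [eu, ev] at key
      have key2 : ψ (a • u + (1 - a) • v)
          ≤ ((a * (ψ u).toReal + (1 - a) * (ψ v).toReal : ℝ) : EReal) := by
        refine key.trans_eq ?_
        rw [← EReal.coe_mul, ← EReal.coe_mul, ← EReal.coe_add]
      refine key2.trans ?_
      have hu' : (ψ u).toReal ≤ α := by rw [eu] at hu; exact_mod_cast hu
      have hv' : (ψ v).toReal ≤ α := by rw [ev] at hv; exact_mod_cast hv
      have : a * (ψ u).toReal + (1 - a) * (ψ v).toReal ≤ α := by nlinarith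
      exact_mod_cast this
    · exact hψlsc.isClosed_preimage (α : EReal)
  have hEnvLe : ∀ (l : ℝ) (yy : H), eMoreauEnv ψ l yy ≤ ψ yy := by
    intro l yy
    have h1 := iInf_le (fun z : H => ψ z + ((‖yy - z‖ ^ 2 / (2 * l) : ℝ) : EReal)) yy
    simpa [eMoreauEnv] using h1
  have hfeask : ∀ yy : H, p ≤ φ yy → ∀ k, p ≤ φl (lam k) yy := fun yy hyy k =>
    hyy.trans (hφle (lam k) (hpos k) yy)
  have hupper : ∀ k, eMoreauEnv ψ (lam k) (x k) ≤ ψ x₀ := fun k =>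
    (hxmin k x₀ (hfeask x₀ hx₀feas k)).trans (hEnvLe _ _)
  have hlowreal : ∀ k, ((cψ + Lψ (x k) - lam k * ‖Lψ‖ ^ 2 / 2 : ℝ) : EReal)
      ≤ eMoreauEnv ψ (lam k) (x k) := by
    intro k
    refine le_iInf fun z => ?_
    have h1 := hLψ z
    have h2 : ((Lψ z + cψ + ‖x k - z‖ ^ 2 / (2 * lam k) : ℝ) : EReal)
        ≤ ψ z + ((‖x k - z‖ ^ 2 / (2 * lam k) : ℝ) : EReal) := by
      rw [EReal.coe_add]
      exact add_le_add h1 (le_refl _)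
    refine le_trans ?_ h2
    apply EReal.coe_le_coe_iff.2
    set tt : ℝ := ‖x k - z‖ with htt
    have h3 : Lψ (x k) - ‖Lψ‖ * tt ≤ Lψ z := by
      have ha : Lψ (x k) - Lψ z = Lψ (x k - z) := by rw [map_sub]
      have hb : Lψ (x k - z) ≤ ‖Lψ‖ * tt := le_trans (le_abs_self _)
        (by simpa [htt] using Lψ.le_opNorm (x k - z))
      linarith [ha ▸ hb]
    have hl := hpos k
    have h5 : 2 * lam k * ‖Lψ‖ * tt - lam k ^ 2 * ‖Lψ‖ ^ 2 ≤ tt ^ 2 := by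
      nlinarith [sq_nonneg (tt - lam k * ‖Lψ‖)]
    have h6 : (2 * lam k * ‖Lψ‖ * tt - lam k ^ 2 * ‖Lψ‖ ^ 2) / (2 * lam k) ≤
        tt ^ 2 / (2 * lam k) := (div_le_div_iff_of_pos_right (by linarith)).2 h5
    have h7 : (2 * lam k * ‖Lψ‖ * tt - lam k ^ 2 * ‖Lψ‖ ^ 2) / (2 * lam k)
        = ‖Lψ‖ * tt - lam k * ‖Lψ‖ ^ 2 / 2 := by
      field_simp
    rw [h7] at h6
    linarith
  -- the convergence of the envelope values
  have htends : Tendsto (fun k => eMoreauEnv ψ (lam k) (x k)) atTop (𝓝 (ψ x₀)) := by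
    refine tendsto_order.2 ⟨?_, ?_⟩
    · intro a ha
      by_contra hcon
      rw [not_eventually] at hcon
      have hcon' : ∃ᶠ k in atTop, eMoreauEnv ψ (lam k) (x k) ≤ a :=
        hcon.mono fun k hk => not_lt.1 hk
      induction a using EReal.rec with
      | bot =>
        obtain ⟨k, hk⟩ := hcon'.exists
        exact absurd (le_bot_iff.1 (le_trans (hlowreal k) hk)) (EReal.coe_ne_bot _)
      | coe a =>
        obtain ⟨φs, hφmono, hφprop⟩ := extraction_of_frequently_atTop hcon'
        have := key_psi ψ hψbot hψsub Lψ cψ hLψ (fun j => lam (φs j)) (fun j => hpos _)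
          (hlam0.comp hφmono.tendsto_atTop) (fun j => x (φs j)) x₀
          (fun y => (hw y).comp hφmono.tendsto_atTop) a (fun j => hφprop j)
        exact absurd this (not_le.2 ha)
      | top => exact absurd ha not_top_lt
    · intro a ha
      exact Eventually.of_forall fun k => lt_of_le_of_lt (hupper k) ha
  have hmini : ∀ y : H, p ≤ φ y → ψ x₀ ≤ ψ y := by
    intro y hy
    have hek : ∀ k, eMoreauEnv ψ (lam k) (x k) ≤ ψ y := fun k =>
      (hxmin k y (hfeask y hy k)).trans (hEnvLe _ _)
    exact le_of_tendsto htends (Eventually.of_forall hek)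
  exact ⟨⟨hx₀feas, hmini⟩, htends⟩
end

section
/- Let H be a real Hilbert space and g_1, …, g_s : H × ℝ^m → ℝ a family of functions; let Φ : H × ℝ^m → ℝ^s be the vector-valued map Φ(x,z) := (g_1(x,z), …, g_s(x,z)), and let Δ := {w ∈ ℝ^s : w_i ≥ 0 for all i, Σ_i w_i = 1} be the unit simplex. Then the following are equivalent: (a) there exists a convex, continuously differentiable function h : H → ℝ such that for every w ∈ Δ the function (x,z) ↦ ⟨w, Φ(x,z)⟩ + h(x) = Σ_i w_i g_i(x,z) + h(x) is convex on H × ℝ^m; (b) for every i ∈ {1,…,s} there exists a convex, continuously differentiable function h_i : H → ℝ such that (x,z) ↦ g_i(x,z) + h_i(x) is convex on H × ℝ^m. (Proposition 6.1.) -/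
private lemma convexOn_finset_sum {E : Type*} [NormedAddCommGroup E] [NormedSpace ℝ E]
    {ι : Type*} (t : Finset ι) (f : ι → E → ℝ)
    (hf : ∀ i ∈ t, ConvexOn ℝ Set.univ (f i)) :
    ConvexOn ℝ Set.univ (fun x => ∑ i ∈ t, f i x) := by
  classical
  induction t using Finset.induction_on with
  | empty => simpa using convexOn_const (0 : ℝ) convex_univ
  | @insert a s hni ih =>
    simp only [Finset.sum_insert hni]
    exact (hf a (Finset.mem_insert_self a s)).add
      (ih fun i hi => hf i (Finset.mem_insert_of_mem hi))

/-- Proposition 6.1: for `Φ = (g_1, …, g_s)` and the unit simplex `Δ`, the existence of a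
single convex `C¹` function `h` making every simplex-scalarization
`(x,z) ↦ Σ_i w_i g_i(x,z) + h(x)` (`w ∈ Δ`) convex is equivalent to the existence, for
each `i`, of a convex `C¹` function `h_i` making `(x,z) ↦ g_i(x,z) + h_i(x)` convex. -/
theorem stmt17 {H : Type*} [NormedAddCommGroup H] [InnerProductSpace ℝ H] {m s : ℕ}
    (g : Fin s → H × EuclideanSpace ℝ (Fin m) → ℝ) :
    (∃ h : H → ℝ, ConvexOn ℝ Set.univ h ∧ ContDiff ℝ 1 h ∧
      ∀ w : Fin s → ℝ, (∀ i, 0 ≤ w i) → (∑ i, w i) = 1 →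
        ConvexOn ℝ Set.univ
          (fun q : H × EuclideanSpace ℝ (Fin m) => (∑ i, w i * g i q) + h q.1)) ↔
    (∀ i : Fin s, ∃ hi : H → ℝ, ConvexOn ℝ Set.univ hi ∧ ContDiff ℝ 1 hi ∧
      ConvexOn ℝ Set.univ (fun q : H × EuclideanSpace ℝ (Fin m) => g i q + hi q.1)) := by
  classical
  constructor
  · rintro ⟨h, hconv, hC1, hall⟩ i
    refine ⟨h, hconv, hC1, ?_⟩
    have := hall (fun j => if j = i then 1 else 0)
      (fun j => by positivity) (by simp)
    simpa using this
  · intro hex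
    choose hi hiconv hiC1 hig using hex
    refine ⟨fun x => ∑ i, hi i x, ?_, ?_, ?_⟩
    · exact convexOn_finset_sum _ _ (fun i _ => hiconv i)
    · exact ContDiff.sum fun i _ => hiC1 i
    · intro w hw hw1
      have hwle : ∀ i, w i ≤ 1 := by
        intro i
        calc w i ≤ ∑ j, w j := Finset.single_le_sum (fun j _ => hw j) (Finset.mem_univ i)
        _ = 1 := hw1
      have hfst : ∀ i, ConvexOn ℝ (Set.univ : Set (H × EuclideanSpace ℝ (Fin m)))
          (fun q => hi i q.1) := by
        intro i
        have := (hiconv i).comp_affineMap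
          ((LinearMap.fst ℝ H (EuclideanSpace ℝ (Fin m))).toAffineMap)
        simpa [Function.comp_def] using this
      have key : ConvexOn ℝ (Set.univ : Set (H × EuclideanSpace ℝ (Fin m)))
          (fun q => ∑ i, (w i * (g i q + hi i q.1) + (1 - w i) * hi i q.1)) := by
        apply convexOn_finset_sum
        intro i _
        have h1 : ConvexOn ℝ Set.univ (fun q : H × EuclideanSpace ℝ (Fin m) =>
            w i * (g i q + hi i q.1)) := by
          simpa [smul_eq_mul] using (hig i).smul (hw i)
        have h2 : ConvexOn ℝ Set.univ (fun q : H × EuclideanSpace ℝ (Fin m) =>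
            (1 - w i) * hi i q.1) := by
          simpa [smul_eq_mul] using (hfst i).smul (by linarith [hwle i])
        exact h1.add h2
      convert key using 1
      funext q
      rw [← Finset.sum_add_distrib]
      exact Finset.sum_congr rfl fun i _ => by ring
end
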